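/- Let U ⊆ ℝⁿ be open and let V = (v^i_j) : U → GL(n,ℝ) be a smooth matrix-valued map. Then the following two conditions are equivalent at every point of U: (a) ∂(V⁻¹)^h_i/∂x^j = ∂(V⁻¹)^h_j/∂xⁱ for all h,i,j = 1,…,n (i.e. each row of V⁻¹, viewed as a 1-form, is closed); (b) Σ_{j=1}^{n} v^j_m · ∂v^k_l/∂x^j = Σ_{i=1}^{n} (∂v^k_m/∂xⁱ) · v^i_l for all k,l,m = 1,…,n. -/

import Mathlib

lemma diffAt_det {n : ℕ} {M : (Fin n → ℝ) → Matrix (Fin n) (Fin n) ℝ} {y : Fin n → ℝ}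
    (h : ∀ k l, DifferentiableAt ℝ (fun z => M z k l) y) :
    DifferentiableAt ℝ (fun z => (M z).det) y := by
  simp only [Matrix.det_apply']
  refine DifferentiableAt.fun_sum fun σ _ => DifferentiableAt.const_mul ?_ _
  exact (HasFDerivAt.finset_prod (fun i (_ : i ∈ Finset.univ) => (h (σ i) i).hasFDerivAt)).differentiableAt

lemma diffAt_inv_entry {n : ℕ} {M : (Fin n → ℝ) → Matrix (Fin n) (Fin n) ℝ} {y : Fin n → ℝ}
    (h : ∀ k l, DifferentiableAt ℝ (fun z => M z k l) y) (hdet : (M y).det ≠ 0) (a b : Fin n) :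
    DifferentiableAt ℝ (fun z => (M z)⁻¹ a b) y := by
  simp only [Matrix.inv_def, Matrix.smul_apply, Ring.inverse_eq_inv', smul_eq_mul,
    Matrix.adjugate_apply]
  refine DifferentiableAt.mul ((diffAt_det h).inv hdet) (diffAt_det fun k l => ?_)
  by_cases hk : k = b
  · subst hk; simp only [Matrix.updateRow_self]; exact differentiableAt_const _
  · simp only [Matrix.updateRow_ne hk]; exact h k l

lemma alg_equiv_aux {n : ℕ} (A W : Matrix (Fin n) (Fin n) ℝ)
    (h1 : A * W = 1) (h2 : W * A = 1) (P : Fin n → Matrix (Fin n) (Fin n) ℝ) :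
    (∀ h i j, (W * P j * W) h i = (W * P i * W) h j) ↔
      (∀ k l m, ∑ j, A j m * P j k l = ∑ i, P i k m * A i l) := by
  have hPW : ∀ j k i, (P j * W) k i = ∑ h, A k h * (W * P j * W) h i := by
    intro j k i
    have e : P j * W = A * (W * P j * W) := by
      rw [← Matrix.mul_assoc, ← Matrix.mul_assoc, h1, Matrix.one_mul]
    rw [e, Matrix.mul_apply]
  have hWPW : ∀ j h i, (W * P j * W) h i = ∑ k, W h k * (P j * W) k i := by
    intro j h i; rw [Matrix.mul_assoc, Matrix.mul_apply]
  constructor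
  · intro ha
    have hC : ∀ k i j, (P j * W) k i = (P i * W) k j := by
      intro k i j
      rw [hPW, hPW]
      exact Finset.sum_congr rfl fun h _ => by rw [ha h i j]
    intro k l m
    have hPkl : ∀ j l, P j k l = ∑ i, (P j * W) k i * A i l := by
      intro j l
      have e : P j = P j * W * A := by rw [Matrix.mul_assoc, h2, Matrix.mul_one]
      conv_lhs => rw [e]
      rw [Matrix.mul_apply]
    calc ∑ j, A j m * P j k l
        = ∑ j, ∑ i, A j m * ((P i * W) k j * A i l) := by
          refine Finset.sum_congr rfl fun j _ => ?_
          rw [hPkl j l, Finset.mul_sum]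
          exact Finset.sum_congr rfl fun i _ => by rw [hC k i j]
      _ = ∑ i, (∑ j, (P i * W) k j * A j m) * A i l := by
          rw [Finset.sum_comm]
          refine Finset.sum_congr rfl fun i _ => ?_
          rw [Finset.sum_mul]
          exact Finset.sum_congr rfl fun j _ => by ring
      _ = ∑ i, P i k m * A i l := by
          refine Finset.sum_congr rfl fun i _ => ?_
          congr 1
          rw [← Matrix.mul_apply, Matrix.mul_assoc, h2, Matrix.mul_one]
  · intro hb
    have hBsym : ∀ k l m, (∑ j, A j m * P j k l) = ∑ j, A j l * P j k m := by
      intro k l m; rw [hb k l m]; exact Finset.sum_congr rfl fun i _ => mul_comm _ _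
    have hPee : ∀ j k l, P j k l = ∑ m, (∑ j', A j' m * P j' k l) * W m j := by
      intro j k l
      have e1 : ∀ m : Fin n, (∑ j', A j' m * P j' k l) * W m j
          = ∑ j', P j' k l * (A j' m * W m j) := by
        intro m; rw [Finset.sum_mul]; exact Finset.sum_congr rfl fun j' _ => by ring
      rw [Finset.sum_congr rfl fun m _ => e1 m, Finset.sum_comm]
      have e2 : ∀ j' : Fin n, (∑ m, P j' k l * (A j' m * W m j)) = P j' k l * (A * W) j' j := by
        intro j'; rw [← Finset.mul_sum, Matrix.mul_apply]
      rw [Finset.sum_congr rfl fun j' _ => e2 j']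
      simp [h1, Matrix.one_apply]
    have hC : ∀ k i j, (P j * W) k i = (P i * W) k j := by
      intro k i j
      have expand : ∀ (j i : Fin n), (P j * W) k i
          = ∑ l, ∑ m, (∑ j', A j' m * P j' k l) * W m j * W l i := by
        intro j i
        rw [Matrix.mul_apply]
        refine Finset.sum_congr rfl fun l _ => ?_
        rw [hPee j k l, Finset.sum_mul]
      rw [expand j i, expand i j]
      calc ∑ l, ∑ m, (∑ j', A j' m * P j' k l) * W m j * W l i
          = ∑ l, ∑ m, (∑ j', A j' l * P j' k m) * W m j * W l i := by
            refine Finset.sum_congr rfl fun l _ => Finset.sum_congr rfl fun m _ => ?_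
            rw [hBsym k l m]
        _ = ∑ m, ∑ l, (∑ j', A j' l * P j' k m) * W m j * W l i := Finset.sum_comm
        _ = ∑ l, ∑ m, (∑ j', A j' m * P j' k l) * W m i * W l j := by
            refine Finset.sum_congr rfl fun l _ => Finset.sum_congr rfl fun m _ => ?_
            ring
    intro h i j
    rw [hWPW, hWPW]
    exact Finset.sum_congr rfl fun k _ => by rw [hC k i j]

/-- Corollary 3.3, compatibility system: for a smooth map
`V = (vⁱⱼ) : U → GL(n,ℝ)`, the following are equivalent at every point of `U`:
(a) `∂(V⁻¹)ʰᵢ/∂xʲ = ∂(V⁻¹)ʰⱼ/∂xⁱ` for all `h,i,j` (each row of `V⁻¹`, viewed as a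
`1`-form, is closed); (b) `Σⱼ vʲₘ ∂vᵏₗ/∂xʲ = Σᵢ (∂vᵏₘ/∂xⁱ) vⁱₗ` for all `k,l,m`. -/
theorem inverse_jacobian_closed_iff_firstOrder_system (n : ℕ)
    (U : Set (Fin n → ℝ)) (hU : IsOpen U)
    (V : (Fin n → ℝ) → Matrix (Fin n) (Fin n) ℝ)
    (hV : ∀ k l : Fin n, ContDiffOn ℝ (⊤ : ℕ∞) (fun y => V y k l) U)
    (hinv : ∀ y ∈ U, IsUnit (V y)) :
    ∀ y ∈ U,
      ((∀ h i j : Fin n,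
          fderiv ℝ (fun z => (V z)⁻¹ h i) y (Pi.single j (1 : ℝ)) =
            fderiv ℝ (fun z => (V z)⁻¹ h j) y (Pi.single i (1 : ℝ)))
        ↔
       (∀ k l m : Fin n,
          ∑ j : Fin n, V y j m *
              fderiv ℝ (fun z => V z k l) y (Pi.single j (1 : ℝ)) =
            ∑ i : Fin n,
              fderiv ℝ (fun z => V z k m) y (Pi.single i (1 : ℝ)) * V y i l)) := by
  intro y hy
  have hdV : ∀ k l, DifferentiableAt ℝ (fun z => V z k l) y := fun k l =>
    ((hV k l).contDiffAt (hU.mem_nhds hy)).differentiableAt (by simp)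
  have hdetUnit : IsUnit (V y).det := (Matrix.isUnit_iff_isUnit_det _).mp (hinv y hy)
  have hdet0 : (V y).det ≠ 0 := hdetUnit.ne_zero
  have hdW : ∀ k l, DifferentiableAt ℝ (fun z => (V z)⁻¹ k l) y :=
    fun k l => diffAt_inv_entry hdV hdet0 k l
  set A : Matrix (Fin n) (Fin n) ℝ := V y with hAdef
  set W : Matrix (Fin n) (Fin n) ℝ := (V y)⁻¹ with hWdef
  have h1 : A * W = 1 := Matrix.mul_nonsing_inv _ hdetUnit
  have h2 : W * A = 1 := Matrix.nonsing_inv_mul _ hdetUnit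
  set Pm : Fin n → Matrix (Fin n) (Fin n) ℝ :=
    fun j => Matrix.of fun h k => fderiv ℝ (fun z => V z h k) y (Pi.single j (1 : ℝ)) with hPmdef
  set Qm : Fin n → Matrix (Fin n) (Fin n) ℝ :=
    fun j => Matrix.of fun h i => fderiv ℝ (fun z => (V z)⁻¹ h i) y (Pi.single j (1 : ℝ))
    with hQmdef
  -- differentiate the identity V * V⁻¹ = 1 entrywise
  have key : ∀ h i j, ∑ k, (A h k * Qm j k i + W k i * Pm j h k) = 0 := by
    intro h i j
    have hsum : HasFDerivAt (fun z => ∑ k, V z h k * (V z)⁻¹ k i)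
        (∑ k, (V y h k • fderiv ℝ (fun z => (V z)⁻¹ k i) y +
          (V y)⁻¹ k i • fderiv ℝ (fun z => V z h k) y)) y :=
      HasFDerivAt.fun_sum fun k _ =>
        (hdV h k).hasFDerivAt.mul (hdW k i).hasFDerivAt
    have hconst : (fun z => ∑ k, V z h k * (V z)⁻¹ k i) =ᶠ[nhds y]
        fun _ => (1 : Matrix (Fin n) (Fin n) ℝ) h i := by
      filter_upwards [hU.mem_nhds hy] with z hz
      rw [← Matrix.mul_apply,
        Matrix.mul_nonsing_inv _ ((Matrix.isUnit_iff_isUnit_det _).mp (hinv z hz))]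
    have h0 : HasFDerivAt (fun z => ∑ k, V z h k * (V z)⁻¹ k i)
        (0 : (Fin n → ℝ) →L[ℝ] ℝ) y :=
      (hasFDerivAt_const ((1 : Matrix (Fin n) (Fin n) ℝ) h i) y).congr_of_eventuallyEq hconst
    have huniq := hsum.unique h0
    have := congrArg (fun L : (Fin n → ℝ) →L[ℝ] ℝ => L (Pi.single j (1 : ℝ))) huniq
    simp only [hAdef, hWdef, hQmdef, hPmdef, Matrix.of_apply]
    simpa [ContinuousLinearMap.sum_apply, ContinuousLinearMap.add_apply,
      ContinuousLinearMap.smul_apply, ContinuousLinearMap.smulRight_apply, smul_eq_mul, mul_comm] using this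
  have hQ : ∀ j, Qm j = -(W * Pm j * W) := by
    intro j
    have hm : A * Qm j + Pm j * W = 0 := by
      ext h i
      simp only [Matrix.add_apply, Matrix.mul_apply, Matrix.zero_apply]
      rw [← key h i j, ← Finset.sum_add_distrib]
      exact Finset.sum_congr rfl fun k _ => by ring
    have hAQ : A * Qm j = -(Pm j * W) := by
      rw [eq_neg_iff_add_eq_zero]; exact hm
    calc Qm j = W * A * Qm j := by rw [h2, Matrix.one_mul]
      _ = W * (A * Qm j) := by rw [Matrix.mul_assoc]
      _ = -(W * (Pm j * W)) := by rw [hAQ, Matrix.mul_neg]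
      _ = -(W * Pm j * W) := by rw [Matrix.mul_assoc]
  have goal_eq : (∀ h i j : Fin n, Qm j h i = Qm i h j) ↔
      (∀ k l m : Fin n, ∑ j, A j m * Pm j k l = ∑ i, Pm i k m * A i l) := by
    have base := alg_equiv_aux A W h1 h2 Pm
    constructor
    · intro ha
      refine base.mp fun h i j => ?_
      have := ha h i j
      rw [hQ j, hQ i] at this
      simpa using this
    · intro hb h i j
      rw [hQ j, hQ i]
      simp only [Matrix.neg_apply, neg_inj]
      exact base.mpr hb h i j
  exact goal_eq
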